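/- The double coset $G_\mathbb{R} c_{\beta_1} w_{\beta_2} B$ is contained in the closure (in $G_\mathbb{C}$) of the double coset $G_\mathbb{R} c_\delta w_{\beta_2} B$. (The inclusion $S'_9 \subset {S'_7}^{cl}$ used to deduce (3.4) from (3.2).) -/

import Mathlib

open Matrix

noncomputable section

/-- 4×4 complex matrices. -/
abbrev M4 : Type := Matrix (Fin 4) (Fin 4) ℂ

/-- The standard symplectic form matrix `J = [[0, -I₂],[I₂, 0]]`. -/
def Jmat : M4 := !![0, 0, -1, 0; 0, 0, 0, -1; 1, 0, 0, 0; 0, 1, 0, 0]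

/-- `G_ℂ = Sp(2,ℂ) = {g ∈ GL(4,ℂ) : ᵗg J g = J}`. -/
def GC : Set M4 := {g | IsUnit g ∧ gᵀ * Jmat * g = Jmat}

/-- `K_ℂ = {diag(g, ᵗg⁻¹) : g ∈ GL(2,ℂ)}`. -/
def KC : Set M4 :=
  {m | ∃ g : Matrix (Fin 2) (Fin 2) ℂ, IsUnit g ∧
    m = !![g 0 0, g 0 1, 0, 0;
           g 1 0, g 1 1, 0, 0;
           0, 0, (gᵀ)⁻¹ 0 0, (gᵀ)⁻¹ 0 1;
           0, 0, (gᵀ)⁻¹ 1 0, (gᵀ)⁻¹ 1 1]}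

/-- The Hermitian form of signature (2,2): `(w,z) = w̄₁z₁ + w̄₂z₂ - w̄₃z₃ - w̄₄z₄`. -/
def hermForm (w z : Fin 4 → ℂ) : ℂ :=
  star (w 0) * z 0 + star (w 1) * z 1 - star (w 2) * z 2 - star (w 3) * z 3

/-- `G_ℝ = G_ℂ ∩ U(2,2)`. -/
def GR : Set M4 :=
  {g | g ∈ GC ∧ ∀ w z : Fin 4 → ℂ, hermForm (g.mulVec w) (g.mulVec z) = hermForm w z}

/-- The standard basis vectors of `ℂ⁴`. -/
def stdVec (i : Fin 4) : Fin 4 → ℂ := Pi.single i 1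

/-- `U₊ = ℂe₁ ⊕ ℂe₂`. -/
def Uplus : Submodule ℂ (Fin 4 → ℂ) := Submodule.span ℂ {stdVec 0, stdVec 1}

/-- `U₋ = ℂe₃ ⊕ ℂe₄`. -/
def Uminus : Submodule ℂ (Fin 4 → ℂ) := Submodule.span ℂ {stdVec 2, stdVec 3}

/-- The line `ℂe₁`. -/
def line1 : Submodule ℂ (Fin 4 → ℂ) := Submodule.span ℂ {stdVec 0}

/-- `Q = {g ∈ G_ℂ : g U₊ = U₊}`. -/
def Qpar : Set M4 := {g | g ∈ GC ∧ Uplus.map g.mulVecLin = Uplus}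

/-- `Q̄ = {g ∈ G_ℂ : g U₋ = U₋}`. -/
def Qbar : Set M4 := {g | g ∈ GC ∧ Uminus.map g.mulVecLin = Uminus}

/-- The Borel subgroup `B = {g ∈ G_ℂ : g ℂe₁ = ℂe₁, g U₊ = U₊}`. -/
def Bor : Set M4 :=
  {g | g ∈ GC ∧ line1.map g.mulVecLin = line1 ∧ Uplus.map g.mulVecLin = Uplus}

/-- `t₁(s) = exp s(E₃₁ - E₁₃)`. -/
def t1 (s : ℝ) : M4 :=
  !![(Real.cos s : ℂ), 0, (-(Real.sin s) : ℂ), 0;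
     0, 1, 0, 0;
     ((Real.sin s : ℝ) : ℂ), 0, (Real.cos s : ℂ), 0;
     0, 0, 0, 1]

/-- `t₂(s) = exp s(E₄₂ - E₂₄)`. -/
def t2 (s : ℝ) : M4 :=
  !![1, 0, 0, 0;
     0, (Real.cos s : ℂ), 0, (-(Real.sin s) : ℂ);
     0, 0, 1, 0;
     0, ((Real.sin s : ℝ) : ℂ), 0, (Real.cos s : ℂ)]

def cb1 : M4 := t1 (Real.pi / 4)
def cb2 : M4 := t2 (Real.pi / 4)
def wb1 : M4 := t1 (Real.pi / 2)
def wb2 : M4 := t2 (Real.pi / 2)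

/-- `c_δ = (1/√2) · [[1,0,0,-1],[0,1,-1,0],[0,1,1,0],[1,0,0,1]]`. -/
def cdelta : M4 :=
  ((Real.sqrt 2 : ℂ))⁻¹ • !![1, 0, 0, -1; 0, 1, -1, 0; 0, 1, 1, 0; 1, 0, 0, 1]

/-- The double coset `A g C = {a g c : a ∈ A, c ∈ C}`. -/
def dc (A : Set M4) (g : M4) (C : Set M4) : Set M4 :=
  {m | ∃ a ∈ A, ∃ c ∈ C, m = a * g * c}

section Helpers

lemma mul_fin_four {α} [NonUnitalNonAssocSemiring α]
    (a₁₁ a₁₂ a₁₃ a₁₄ a₂₁ a₂₂ a₂₃ a₂₄ a₃₁ a₃₂ a₃₃ a₃₄ a₄₁ a₄₂ a₄₃ a₄₄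
     b₁₁ b₁₂ b₁₃ b₁₄ b₂₁ b₂₂ b₂₃ b₂₄ b₃₁ b₃₂ b₃₃ b₃₄ b₄₁ b₄₂ b₄₃ b₄₄ : α) :
    !![a₁₁, a₁₂, a₁₃, a₁₄; a₂₁, a₂₂, a₂₃, a₂₄; a₃₁, a₃₂, a₃₃, a₃₄; a₄₁, a₄₂, a₄₃, a₄₄] *
    !![b₁₁, b₁₂, b₁₃, b₁₄; b₂₁, b₂₂, b₂₃, b₂₄; b₃₁, b₃₂, b₃₃, b₃₄; b₄₁, b₄₂, b₄₃, b₄₄] =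
    !![a₁₁*b₁₁ + a₁₂*b₂₁ + a₁₃*b₃₁ + a₁₄*b₄₁, a₁₁*b₁₂ + a₁₂*b₂₂ + a₁₃*b₃₂ + a₁₄*b₄₂,
       a₁₁*b₁₃ + a₁₂*b₂₃ + a₁₃*b₃₃ + a₁₄*b₄₃, a₁₁*b₁₄ + a₁₂*b₂₄ + a₁₃*b₃₄ + a₁₄*b₄₄;
       a₂₁*b₁₁ + a₂₂*b₂₁ + a₂₃*b₃₁ + a₂₄*b₄₁, a₂₁*b₁₂ + a₂₂*b₂₂ + a₂₃*b₃₂ + a₂₄*b₄₂,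
       a₂₁*b₁₃ + a₂₂*b₂₃ + a₂₃*b₃₃ + a₂₄*b₄₃, a₂₁*b₁₄ + a₂₂*b₂₄ + a₂₃*b₃₄ + a₂₄*b₄₄;
       a₃₁*b₁₁ + a₃₂*b₂₁ + a₃₃*b₃₁ + a₃₄*b₄₁, a₃₁*b₁₂ + a₃₂*b₂₂ + a₃₃*b₃₂ + a₃₄*b₄₂,
       a₃₁*b₁₃ + a₃₂*b₂₃ + a₃₃*b₃₃ + a₃₄*b₄₃, a₃₁*b₁₄ + a₃₂*b₂₄ + a₃₃*b₃₄ + a₃₄*b₄₄;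
       a₄₁*b₁₁ + a₄₂*b₂₁ + a₄₃*b₃₁ + a₄₄*b₄₁, a₄₁*b₁₂ + a₄₂*b₂₂ + a₄₃*b₃₂ + a₄₄*b₄₂,
       a₄₁*b₁₃ + a₄₂*b₂₃ + a₄₃*b₃₃ + a₄₄*b₄₃, a₄₁*b₁₄ + a₄₂*b₂₄ + a₄₃*b₃₄ + a₄₄*b₄₄] := by
  ext i j
  fin_cases i <;> fin_cases j <;>
    simp [Matrix.mul_apply, Fin.sum_univ_four]

lemma eq_fin_four {α} {a₁₁ a₁₂ a₁₃ a₁₄ a₂₁ a₂₂ a₂₃ a₂₄ a₃₁ a₃₂ a₃₃ a₃₄ a₄₁ a₄₂ a₄₃ a₄₄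
     b₁₁ b₁₂ b₁₃ b₁₄ b₂₁ b₂₂ b₂₃ b₂₄ b₃₁ b₃₂ b₃₃ b₃₄ b₄₁ b₄₂ b₄₃ b₄₄ : α}
    (h11 : a₁₁ = b₁₁) (h12 : a₁₂ = b₁₂) (h13 : a₁₃ = b₁₃) (h14 : a₁₄ = b₁₄)
    (h21 : a₂₁ = b₂₁) (h22 : a₂₂ = b₂₂) (h23 : a₂₃ = b₂₃) (h24 : a₂₄ = b₂₄)
    (h31 : a₃₁ = b₃₁) (h32 : a₃₂ = b₃₂) (h33 : a₃₃ = b₃₃) (h34 : a₃₄ = b₃₄)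
    (h41 : a₄₁ = b₄₁) (h42 : a₄₂ = b₄₂) (h43 : a₄₃ = b₄₃) (h44 : a₄₄ = b₄₄) :
    !![a₁₁, a₁₂, a₁₃, a₁₄; a₂₁, a₂₂, a₂₃, a₂₄; a₃₁, a₃₂, a₃₃, a₃₄; a₄₁, a₄₂, a₄₃, a₄₄] =
    !![b₁₁, b₁₂, b₁₃, b₁₄; b₂₁, b₂₂, b₂₃, b₂₄; b₃₁, b₃₂, b₃₃, b₃₄; b₄₁, b₄₂, b₄₃, b₄₄] := by
  subst_vars; rfl

lemma smul_fin_four {α} [Mul α] (c : α)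
    (a₁₁ a₁₂ a₁₃ a₁₄ a₂₁ a₂₂ a₂₃ a₂₄ a₃₁ a₃₂ a₃₃ a₃₄ a₄₁ a₄₂ a₄₃ a₄₄ : α) :
    c • !![a₁₁, a₁₂, a₁₃, a₁₄; a₂₁, a₂₂, a₂₃, a₂₄; a₃₁, a₃₂, a₃₃, a₃₄; a₄₁, a₄₂, a₄₃, a₄₄] =
    !![c*a₁₁, c*a₁₂, c*a₁₃, c*a₁₄; c*a₂₁, c*a₂₂, c*a₂₃, c*a₂₄;
       c*a₃₁, c*a₃₂, c*a₃₃, c*a₃₄; c*a₄₁, c*a₄₂, c*a₄₃, c*a₄₄] := by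
  ext i j
  fin_cases i <;> fin_cases j <;> simp [Matrix.smul_apply]

lemma JJ : Jmat * Jmat = -1 := by
  ext i j
  fin_cases i <;> fin_cases j <;>
    simp [Jmat, Matrix.mul_apply, Fin.sum_univ_four, Matrix.one_apply] <;> rfl

lemma isUnit_of_sympl {g : M4} (h : gᵀ * Jmat * g = Jmat) : IsUnit g := by
  have h1 : ((-Jmat) * gᵀ * Jmat) * g = 1 := by
    rw [mul_assoc, mul_assoc, ← mul_assoc gᵀ, h, neg_mul, JJ]; simp
  have : Invertible g := invertibleOfLeftInverse _ _ h1
  exact isUnit_of_invertible g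

lemma mem_GC_of_sympl {g : M4} (h : gᵀ * Jmat * g = Jmat) : g ∈ GC :=
  ⟨isUnit_of_sympl h, h⟩

end Helpers
def APm (t : ℂ) : M4 :=
  !![1+7*t^2+7*t^4+t^6, -1+3*t^2-3*t^4+t^6, 1+5*t^2-5*t^4-t^6, -1+t^2+t^4-t^6;
     0, 2*t+12*t^3+2*t^5, -2*t+4*t^3-2*t^5, 0;
     1+5*t^2-5*t^4-t^6, -1+t^2+t^4-t^6, 1+7*t^2+7*t^4+t^6, -1+3*t^2-3*t^4+t^6;
     -2*t+4*t^3-2*t^5, 0, 0, 2*t+12*t^3+2*t^5]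

def APmT (t : ℂ) : M4 :=
  !![1+7*t^2+7*t^4+t^6, 0, 1+5*t^2-5*t^4-t^6, -2*t+4*t^3-2*t^5;
     -1+3*t^2-3*t^4+t^6, 2*t+12*t^3+2*t^5, -1+t^2+t^4-t^6, 0;
     1+5*t^2-5*t^4-t^6, -2*t+4*t^3-2*t^5, 1+7*t^2+7*t^4+t^6, 0;
     -1+t^2+t^4-t^6, 0, -1+3*t^2-3*t^4+t^6, 2*t+12*t^3+2*t^5]

def BPm (t : ℂ) : M4 :=
  !![-4*t^2-4*t^4+4*t^6+4*t^8, -t-2*t^3+2*t^7+t^9, 1+3*t^2+4*t^4+4*t^6+3*t^8+t^10, -t-2*t^3-2*t^5-2*t^7-t^9;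
     0, -4*t^3+4*t^7, -4*t^2-4*t^4-4*t^6-4*t^8, 4*t^3+4*t^7;
     0, 0, -4*t^2-4*t^4+4*t^6+4*t^8, 0;
     0, 0, 1+3*t^2+2*t^4-2*t^6-3*t^8-t^10, -2*t-4*t^3+4*t^7+2*t^9]

def BPmT (t : ℂ) : M4 :=
  !![-4*t^2-4*t^4+4*t^6+4*t^8, 0, 0, 0;
     -t-2*t^3+2*t^7+t^9, -4*t^3+4*t^7, 0, 0;
     1+3*t^2+4*t^4+4*t^6+3*t^8+t^10, -4*t^2-4*t^4-4*t^6-4*t^8, -4*t^2-4*t^4+4*t^6+4*t^8, 1+3*t^2+2*t^4-2*t^6-3*t^8-t^10;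
     -t-2*t^3-2*t^5-2*t^7-t^9, 4*t^3+4*t^7, 0, -2*t-4*t^3+4*t^7+2*t^9]

def MPm (t : ℂ) : M4 :=
  !![-1+t^4, 0, 1+2*t^2+t^4, -t-t^3;
     0, 0, 0, 1-t^4;
     -1+2*t^2-t^4, 0, -1+t^4, t-t^3;
     -2*t+2*t^3, -1+t^4, 0, 0]


def s2 : ℂ := (Real.sqrt 2 : ℂ)

def N7m : M4 := !![1,-1,0,0; 0,0,-1,-1; 0,0,1,-1; 1,1,0,0]

def Km : M4 := !![0,0,-1,0; 0,0,0,-(1/2); 1,0,0,0; 0,1/2,0,0]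

def I22m : M4 := !![1,0,0,0; 0,1,0,0; 0,0,-1,0; 0,0,0,-1]

def Dsm : M4 := !![1,0,0,0; 0,s2,0,0; 0,0,1,0; 0,0,0,s2]

def Amat (t : ℂ) : M4 := (8*(t^2+t^4))⁻¹ • APm t

def bMat (t : ℂ) : M4 := (4*(-t^2-t^4+t^6+t^8))⁻¹ • (BPm t * Dsm)

def mMat (t : ℂ) : M4 := ((t^4-1) * s2)⁻¹ • (MPm t * Dsm)

lemma APm_transpose (t : ℂ) : (APm t)ᵀ = APmT t := by
  ext i j; fin_cases i <;> fin_cases j <;> simp [APm, APmT, Matrix.transpose_apply] <;> rfl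

lemma BPm_transpose (t : ℂ) : (BPm t)ᵀ = BPmT t := by
  ext i j; fin_cases i <;> fin_cases j <;> simp [BPm, BPmT, Matrix.transpose_apply] <;> rfl

lemma Dsm_transpose : Dsmᵀ = Dsm := by
  ext i j; fin_cases i <;> fin_cases j <;> simp [Dsm, Matrix.transpose_apply] <;> rfl

lemma LAJ (t : ℂ) : APmT t * (Jmat * APm t) = (64*(t^2+t^4)^2) • Jmat := by
  simp only [APm, APmT, Jmat]
  rw [smul_fin_four, mul_fin_four, mul_fin_four]
  apply eq_fin_four <;> ring

lemma LAI (t : ℂ) : APmT t * (I22m * APm t) = (64*(t^2+t^4)^2) • I22m := by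
  simp only [APm, APmT, I22m]
  rw [smul_fin_four, mul_fin_four, mul_fin_four]
  apply eq_fin_four <;> ring

lemma LBK (t : ℂ) : BPmT t * (Jmat * BPm t) = (16*(-t^2-t^4+t^6+t^8)^2) • Km := by
  simp only [BPm, BPmT, Jmat, Km]
  rw [smul_fin_four, mul_fin_four, mul_fin_four]
  apply eq_fin_four <;> ring

lemma LProd (t : ℂ) : APm t * (N7m * BPm t) = (32*t^4+64*t^6+32*t^8) • MPm t := by
  simp only [APm, N7m, BPm, MPm]
  rw [smul_fin_four, mul_fin_four, mul_fin_four]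
  apply eq_fin_four <;> ring

lemma hs2 : s2^2 = 2 := by
  simp only [s2]
  rw [← Complex.ofReal_pow]
  norm_num [Real.sq_sqrt]

lemma hs2' : s2 ≠ 0 := by
  simp only [s2, ne_eq, Complex.ofReal_eq_zero]
  positivity

lemma LDs : Dsm * (Km * Dsm) = Jmat := by
  simp only [Dsm, Km, Jmat]
  rw [mul_fin_four, mul_fin_four]
  apply eq_fin_four <;>
    first
      | ring1
      | linear_combination (-(1:ℂ)/2) * hs2
      | linear_combination ((1:ℂ)/2) * hs2

lemma L8 : cdelta * wb2 = s2⁻¹ • N7m := by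
  simp only [cdelta, wb2, t2, s2]
  rw [Real.cos_pi_div_two, Real.sin_pi_div_two]
  rw [Matrix.smul_mul]
  congr 1
  simp only [Complex.ofReal_zero, Complex.ofReal_one, N7m]
  rw [mul_fin_four]
  apply eq_fin_four <;> norm_num

lemma Asympl (t : ℂ) (h0 : t ≠ 0) (h1 : 1 + t^2 ≠ 0) :
    (Amat t)ᵀ * Jmat * Amat t = Jmat := by
  have hza : (8*(t^2+t^4) : ℂ) ≠ 0 := by
    have h : (8*(t^2+t^4) : ℂ) = 8 * t^2 * (1+t^2) := by ring
    rw [h]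
    exact mul_ne_zero (mul_ne_zero (by norm_num) (pow_ne_zero 2 h0)) h1
  rw [Amat, Matrix.transpose_smul, APm_transpose, Matrix.smul_mul, Matrix.smul_mul,
    Matrix.mul_smul, smul_smul, mul_assoc, LAJ, smul_smul]
  have h : (8*(t^2+t^4) : ℂ)⁻¹ * (8*(t^2+t^4))⁻¹ * (64*(t^2+t^4)^2) = 1 := by
    field_simp
    ring
  rw [h, one_smul]

lemma LBK' (t : ℂ) : Dsm * (BPmT t * (Jmat * (BPm t * Dsm)))
    = (16*(-t^2-t^4+t^6+t^8)^2) • Jmat := by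
  rw [show Jmat * (BPm t * Dsm) = (Jmat * BPm t) * Dsm from (mul_assoc _ _ _).symm,
      show BPmT t * (Jmat * BPm t * Dsm) = (BPmT t * (Jmat * BPm t)) * Dsm from
        (mul_assoc _ _ _).symm,
      LBK, Matrix.smul_mul, Matrix.mul_smul, LDs]

lemma Bsympl (t : ℂ) (h0 : t ≠ 0) (h1 : 1 + t^2 ≠ 0) (h2 : 1 - t^2 ≠ 0) :
    (bMat t)ᵀ * Jmat * bMat t = Jmat := by
  have hzb : (4*(-t^2-t^4+t^6+t^8) : ℂ) ≠ 0 := by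
    have h : (4*(-t^2-t^4+t^6+t^8) : ℂ) = -(4 * t^2 * (1+t^2)^2 * (1-t^2)) := by ring
    rw [h, neg_ne_zero]
    exact mul_ne_zero (mul_ne_zero (mul_ne_zero (by norm_num) (pow_ne_zero 2 h0))
      (pow_ne_zero 2 h1)) h2
  rw [bMat, Matrix.transpose_smul, Matrix.transpose_mul, Dsm_transpose, BPm_transpose]
  simp only [Matrix.smul_mul, Matrix.mul_smul, smul_smul, mul_assoc]
  rw [LBK', smul_smul]
  have h : (4*(-t^2-t^4+t^6+t^8) : ℂ)⁻¹ * (4*(-t^2-t^4+t^6+t^8))⁻¹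
      * (16*(-t^2-t^4+t^6+t^8)^2) = 1 := by
    have hb : (-1 - t^2 + t^4 + t^6 : ℂ) ≠ 0 := by
      intro hc; apply hzb; linear_combination (4*t^2) * hc
    field_simp
    ring1
  rw [h, one_smul]

lemma LProd' (t : ℂ) : APm t * (N7m * (BPm t * Dsm))
    = (32*t^4+64*t^6+32*t^8) • (MPm t * Dsm) := by
  rw [show N7m * (BPm t * Dsm) = (N7m * BPm t) * Dsm from (mul_assoc _ _ _).symm,
      show APm t * ((N7m * BPm t) * Dsm) = (APm t * (N7m * BPm t)) * Dsm from
        (mul_assoc _ _ _).symm,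
      LProd, Matrix.smul_mul]

lemma keyId (t : ℂ) (h0 : t ≠ 0) (h1 : 1 + t^2 ≠ 0) (h2 : 1 - t^2 ≠ 0) :
    Amat t * (cdelta * wb2) * bMat t = mMat t := by
  have hza : (8*(t^2+t^4) : ℂ) ≠ 0 := by
    have h : (8*(t^2+t^4) : ℂ) = 8 * t^2 * (1+t^2) := by ring
    rw [h]
    exact mul_ne_zero (mul_ne_zero (by norm_num) (pow_ne_zero 2 h0)) h1
  have hzb : (4*(-t^2-t^4+t^6+t^8) : ℂ) ≠ 0 := by
    have h : (4*(-t^2-t^4+t^6+t^8) : ℂ) = -(4 * t^2 * (1+t^2)^2 * (1-t^2)) := by ring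
    rw [h, neg_ne_zero]
    exact mul_ne_zero (mul_ne_zero (mul_ne_zero (by norm_num) (pow_ne_zero 2 h0))
      (pow_ne_zero 2 h1)) h2
  have hmu : (t^4-1 : ℂ) ≠ 0 := by
    have h : (t^4 - 1 : ℂ) = -((1-t^2) * (1+t^2)) := by ring
    rw [h, neg_ne_zero]
    exact mul_ne_zero h2 h1
  rw [L8, Amat, bMat, mMat]
  simp only [Matrix.smul_mul, Matrix.mul_smul, smul_smul, mul_assoc]
  rw [LProd', smul_smul]
  congr 1
  apply eq_inv_of_mul_eq_one_left
  have hs := hs2'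
  have hb : (-1 - t^2 + t^4 + t^6 : ℂ) ≠ 0 := by
    intro hc; apply hzb; linear_combination (4*t^2) * hc
  field_simp
  ring1

lemma hermForm_eq (w z : Fin 4 → ℂ) : hermForm w z = star w ⬝ᵥ (I22m *ᵥ z) := by
  simp [hermForm, dotProduct, Matrix.mulVec, I22m, Fin.sum_univ_four, Pi.star_apply, Matrix.vecHead, Matrix.vecTail]
  ring

lemma herm_of {g : M4} (hg : gᴴ * I22m * g = I22m) :
    ∀ w z, hermForm (g.mulVec w) (g.mulVec z) = hermForm w z := by
  intro w z
  rw [hermForm_eq, hermForm_eq, Matrix.star_mulVec, Matrix.mulVec_mulVec,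
    Matrix.dotProduct_mulVec, Matrix.dotProduct_mulVec, Matrix.vecMul_vecMul,
    ← mul_assoc, hg]

lemma AmatH (x : ℝ) : (Amat (x:ℂ))ᴴ = (Amat (x:ℂ))ᵀ := by
  ext i j
  fin_cases i <;> fin_cases j <;>
    simp [Amat, APm, Matrix.conjTranspose_apply, Matrix.transpose_apply, Matrix.smul_apply,
      Complex.star_def, _root_.map_add, _root_.map_sub, map_neg, _root_.map_mul, map_pow, map_inv₀, _root_.map_ofNat,
      Complex.conj_ofReal, _root_.map_one]

lemma Aherm (x : ℝ) (h0 : (x:ℂ) ≠ 0) (h1 : 1 + (x:ℂ)^2 ≠ 0) :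
    (Amat (x:ℂ))ᴴ * I22m * Amat (x:ℂ) = I22m := by
  have hza : (8*((x:ℂ)^2+(x:ℂ)^4) : ℂ) ≠ 0 := by
    have h : (8*((x:ℂ)^2+(x:ℂ)^4) : ℂ) = 8 * (x:ℂ)^2 * (1+(x:ℂ)^2) := by ring
    rw [h]
    exact mul_ne_zero (mul_ne_zero (by norm_num) (pow_ne_zero 2 h0)) h1
  rw [AmatH, Amat, Matrix.transpose_smul, APm_transpose, Matrix.smul_mul, Matrix.smul_mul,
    Matrix.mul_smul, smul_smul, mul_assoc, LAI, smul_smul]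
  have h : (8*((x:ℂ)^2+(x:ℂ)^4) : ℂ)⁻¹ * (8*((x:ℂ)^2+(x:ℂ)^4))⁻¹
      * (64*((x:ℂ)^2+(x:ℂ)^4)^2) = 1 := by
    field_simp
    ring
  rw [h, one_smul]

lemma A_mem_GR (x : ℝ) (h0 : (x:ℂ) ≠ 0) (h1 : 1 + (x:ℂ)^2 ≠ 0) : Amat (x:ℂ) ∈ GR :=
  ⟨mem_GC_of_sympl (Asympl _ h0 h1), herm_of (Aherm x h0 h1)⟩

lemma bcol0 (t : ℂ) (h0 : t ≠ 0) (h1 : 1 + t^2 ≠ 0) (h2 : 1 - t^2 ≠ 0) :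
    bMat t *ᵥ stdVec 0 = stdVec 0 := by
  have hzb : (4*(-t^2-t^4+t^6+t^8) : ℂ) ≠ 0 := by
    have h : (4*(-t^2-t^4+t^6+t^8) : ℂ) = -(4 * t^2 * (1+t^2)^2 * (1-t^2)) := by ring
    rw [h, neg_ne_zero]
    exact mul_ne_zero (mul_ne_zero (mul_ne_zero (by norm_num) (pow_ne_zero 2 h0))
      (pow_ne_zero 2 h1)) h2
  have hzb0 : (-t^2-t^4+t^6+t^8 : ℂ) ≠ 0 := by
    intro hc
    exact hzb (by rw [hc, mul_zero])
  have hb : (-1 - t^2 + t^4 + t^6 : ℂ) ≠ 0 := by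
    intro hc; apply hzb; linear_combination (4*t^2) * hc
  funext i
  fin_cases i <;>
    simp [bMat, BPm, Dsm, stdVec, Matrix.mulVec, dotProduct, Fin.sum_univ_four,
        Pi.single, Matrix.smul_apply, Matrix.mul_apply] <;>
    field_simp <;> ring1

lemma bcol1 (t : ℂ) :
    bMat t *ᵥ stdVec 1 =
      ((4*(-t^2-t^4+t^6+t^8))⁻¹ * ((-t-2*t^3+2*t^7+t^9) * s2)) • stdVec 0 +
      ((4*(-t^2-t^4+t^6+t^8))⁻¹ * ((-4*t^3+4*t^7) * s2)) • stdVec 1 := by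
  funext i
  fin_cases i <;>
    simp [bMat, BPm, Dsm, stdVec, Matrix.mulVec, dotProduct, Fin.sum_univ_four,
        Pi.single, Matrix.smul_apply, Matrix.mul_apply] <;>
    ring1

lemma map_line1 {g : M4} (h : g *ᵥ stdVec 0 = stdVec 0) :
    line1.map g.mulVecLin = line1 := by
  rw [line1, Submodule.map_span, Set.image_singleton, Matrix.mulVecLin_apply, h]

lemma map_Uplus {g : M4} (h0 : g *ᵥ stdVec 0 = stdVec 0) {c d : ℂ} (hd : d ≠ 0)
    (h1 : g *ᵥ stdVec 1 = c • stdVec 0 + d • stdVec 1) :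
    Uplus.map g.mulVecLin = Uplus := by
  rw [Uplus, Submodule.map_span, Set.image_insert_eq, Set.image_singleton,
    Matrix.mulVecLin_apply, Matrix.mulVecLin_apply, h0, h1]
  apply le_antisymm
  · rw [Submodule.span_le]
    rintro v (rfl | rfl)
    · exact Submodule.subset_span (Set.mem_insert _ _)
    · exact Submodule.add_mem _
        (Submodule.smul_mem _ _ (Submodule.subset_span (Set.mem_insert _ _)))
        (Submodule.smul_mem _ _ (Submodule.subset_span (Set.mem_insert_of_mem _ rfl)))
  · rw [Submodule.span_le]
    rintro v (rfl | rfl)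
    · exact Submodule.subset_span (Set.mem_insert _ _)
    · have hv : stdVec 1 = d⁻¹ • (c • stdVec 0 + d • stdVec 1) - (d⁻¹ * c) • stdVec 0 := by
        rw [smul_add, smul_smul, smul_smul, inv_mul_cancel₀ hd, one_smul]
        abel
      have hmem : d⁻¹ • (c • stdVec 0 + d • stdVec 1) - (d⁻¹ * c) • stdVec 0 ∈
          Submodule.span ℂ {stdVec 0, c • stdVec 0 + d • stdVec 1} :=
        Submodule.sub_mem _
          (Submodule.smul_mem _ _ (Submodule.subset_span (Set.mem_insert_of_mem _ rfl)))
          (Submodule.smul_mem _ _ (Submodule.subset_span (Set.mem_insert _ _)))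
      rwa [← hv] at hmem

lemma b_mem_Bor (t : ℂ) (h0 : t ≠ 0) (h1 : 1 + t^2 ≠ 0) (h2 : 1 - t^2 ≠ 0) :
    bMat t ∈ Bor := by
  have hzb : (4*(-t^2-t^4+t^6+t^8) : ℂ) ≠ 0 := by
    have h : (4*(-t^2-t^4+t^6+t^8) : ℂ) = -(4 * t^2 * (1+t^2)^2 * (1-t^2)) := by ring
    rw [h, neg_ne_zero]
    exact mul_ne_zero (mul_ne_zero (mul_ne_zero (by norm_num) (pow_ne_zero 2 h0))
      (pow_ne_zero 2 h1)) h2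
  have hd : ((4*(-t^2-t^4+t^6+t^8))⁻¹ * ((-4*t^3+4*t^7) * s2) : ℂ) ≠ 0 := by
    refine mul_ne_zero (inv_ne_zero hzb) (mul_ne_zero ?_ hs2')
    have h : (-4*t^3+4*t^7 : ℂ) = -(4 * t^3 * (1-t^2) * (1+t^2)) := by ring
    rw [h, neg_ne_zero]
    exact mul_ne_zero (mul_ne_zero (mul_ne_zero (by norm_num) (pow_ne_zero 3 h0)) h2) h1
  exact ⟨mem_GC_of_sympl (Bsympl t h0 h1 h2), map_line1 (bcol0 t h0 h1 h2),
    map_Uplus (bcol0 t h0 h1 h2) hd (bcol1 t)⟩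

lemma GR_mul {g h : M4} (hg : g ∈ GR) (hh : h ∈ GR) : g * h ∈ GR := by
  obtain ⟨⟨hgu, hgs⟩, hgh⟩ := hg
  obtain ⟨⟨hhu, hhs⟩, hhh⟩ := hh
  refine ⟨⟨hgu.mul hhu, ?_⟩, ?_⟩
  · rw [Matrix.transpose_mul]
    calc hᵀ * gᵀ * Jmat * (g * h) = hᵀ * (gᵀ * Jmat * g) * h := by
          simp only [mul_assoc]
      _ = Jmat := by rw [hgs]; exact hhs
  · intro w z
    rw [← Matrix.mulVec_mulVec, ← Matrix.mulVec_mulVec, hgh, hhh]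

lemma Bor_mul {g h : M4} (hg : g ∈ Bor) (hh : h ∈ Bor) : g * h ∈ Bor := by
  obtain ⟨⟨hgu, hgs⟩, hgl, hgp⟩ := hg
  obtain ⟨⟨hhu, hhs⟩, hhl, hhp⟩ := hh
  refine ⟨⟨hgu.mul hhu, ?_⟩, ?_, ?_⟩
  · rw [Matrix.transpose_mul]
    calc hᵀ * gᵀ * Jmat * (g * h) = hᵀ * (gᵀ * Jmat * g) * h := by
          simp only [mul_assoc]
      _ = Jmat := by rw [hgs]; exact hhs
  · rw [Matrix.mulVecLin_mul, Submodule.map_comp, hhl, hgl]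
  · rw [Matrix.mulVecLin_mul, Submodule.map_comp, hhp, hgp]

lemma m0 : cb1 * wb2 = mMat 0 := by
  have hne : (Real.sqrt 2 : ℂ) ≠ 0 := hs2'
  have hsr : (Real.sqrt 2 : ℂ)^2 = 2 := hs2
  simp only [mMat, cb1, wb2, t1, t2, MPm, Dsm, s2]
  rw [Real.cos_pi_div_four, Real.sin_pi_div_four, Real.cos_pi_div_two, Real.sin_pi_div_two]
  push_cast
  rw [mul_fin_four, mul_fin_four, smul_fin_four]
  apply eq_fin_four <;>
    first
      | ring1
      | linear_combination hsr
      | linear_combination -hsr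
      | (field_simp; ring1)
      | (field_simp; linear_combination hsr)
      | (field_simp; linear_combination -hsr)
      | field_simp

lemma contMPm : Continuous (fun z : ℂ => MPm z) := by
  apply continuous_matrix
  intro i j
  fin_cases i <;> fin_cases j <;> simp [MPm] <;> fun_prop

lemma contmMat : ContinuousAt mMat 0 := by
  have h : ContinuousAt (fun z : ℂ => ((z^4-1) * s2)⁻¹ • (MPm z * Dsm)) 0 := by
    refine ContinuousAt.smul (f := fun z : ℂ => ((z^4-1) * s2)⁻¹) (g := fun z : ℂ => MPm z * Dsm) ?_ ?_
    · apply ContinuousAt.inv₀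
      · exact Continuous.continuousAt (by fun_prop)
      · simp [hs2']
    · exact (contMPm.matrix_mul continuous_const).continuousAt
  exact h

/-- `G_ℝ c_{β₁} w_{β₂} B ⊆ cl(G_ℝ c_δ w_{β₂} B)`, i.e. `S'₉ ⊆ S'₇^cl`. -/
theorem stmt_8 : dc GR (cb1 * wb2) Bor ⊆ closure (dc GR (cdelta * wb2) Bor) := by
  rintro x ⟨g, hg, c, hc, rfl⟩
  set sq : ℕ → ℝ := fun n => (2⁻¹ : ℝ)^(n+1) with hsq
  have hsq_pos : ∀ n, 0 < sq n := fun n => by positivity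
  have hsq_lt : ∀ n, sq n < 1 := fun n =>
    pow_lt_one₀ (by norm_num) (by norm_num) (Nat.succ_ne_zero n)
  have h0 : ∀ n, ((sq n : ℝ) : ℂ) ≠ 0 :=
    fun n => Complex.ofReal_ne_zero.mpr (ne_of_gt (hsq_pos n))
  have h1 : ∀ n, (1 : ℂ) + ((sq n : ℝ) : ℂ)^2 ≠ 0 := by
    intro n
    have : (1 : ℂ) + ((sq n : ℝ) : ℂ)^2 = ((1 + (sq n)^2 : ℝ) : ℂ) := by push_cast; ring
    rw [this]
    exact Complex.ofReal_ne_zero.mpr (by positivity)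
  have h2 : ∀ n, (1 : ℂ) - ((sq n : ℝ) : ℂ)^2 ≠ 0 := by
    intro n
    have : (1 : ℂ) - ((sq n : ℝ) : ℂ)^2 = ((1 - (sq n)^2 : ℝ) : ℂ) := by push_cast; ring
    rw [this]
    refine Complex.ofReal_ne_zero.mpr (ne_of_gt ?_)
    have := hsq_pos n
    have := hsq_lt n
    nlinarith
  have hseqR : Filter.Tendsto sq Filter.atTop (nhds 0) := by
    have base : Filter.Tendsto (fun n : ℕ => (2⁻¹:ℝ)^n) Filter.atTop (nhds 0) :=
      tendsto_pow_atTop_nhds_zero_of_lt_one (by norm_num) (by norm_num)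
    have := base.mul_const (2⁻¹ : ℝ)
    simpa [hsq, pow_succ] using this
  have hseqC : Filter.Tendsto (fun n => ((sq n : ℝ) : ℂ)) Filter.atTop (nhds 0) := by
    have := (Complex.continuous_ofReal.tendsto 0).comp hseqR
    exact this
  have hMseq : Filter.Tendsto (fun n => mMat ((sq n : ℝ) : ℂ)) Filter.atTop (nhds (mMat 0)) :=
    contmMat.tendsto.comp hseqC
  have hF : Continuous (fun M : M4 => g * M * c) :=
    (continuous_const.matrix_mul continuous_id).matrix_mul continuous_const
  rw [m0]
  refine mem_closure_of_tendsto (b := Filter.atTop)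
    (f := fun n : ℕ => g * mMat ((sq n : ℝ) : ℂ) * c) ?_ ?_
  · exact (hF.continuousAt.tendsto).comp hMseq
  · filter_upwards with n
    refine ⟨g * Amat ((sq n : ℝ) : ℂ), GR_mul hg (A_mem_GR _ (h0 n) (h1 n)),
      bMat ((sq n : ℝ) : ℂ) * c, Bor_mul (b_mem_Bor _ (h0 n) (h1 n) (h2 n)) hc, ?_⟩
    rw [← keyId _ (h0 n) (h1 n) (h2 n)]
    simp only [mul_assoc]
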